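/- The set of a ∈ ℂ for which the polynomial g_{2,a}(t,x) is not irreducible in the polynomial ring ℂ[t,x] is finite; in particular, for all but finitely many a ∈ ℂ the conic g_{2,a} = 0 is reduced and irreducible. -/

import Mathlib

open MvPolynomial

/-- The conic `g_{2,a}(t,x) = (1/10)a²t² − 10t² − (12/5)√−10·a·t + 2a² − (3/5)√−10·a·x·t
 + a²x + 4 + 2x − x²` (`√−10 = i√10`), as an element of `ℂ[t,x]`; here `t = X 0`, `x = X 1`. -/
noncomputable def g2 (a : ℂ) : MvPolynomial (Fin 2) ℂ :=
  C (1 / 10 * a ^ 2) * X 0 ^ 2 - C 10 * X 0 ^ 2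
    - C (12 / 5 * (Complex.I * (Real.sqrt 10 : ℂ)) * a) * X 0 + C (2 * a ^ 2)
    - C (3 / 5 * (Complex.I * (Real.sqrt 10 : ℂ)) * a) * X 1 * X 0
    + C (a ^ 2) * X 1 + C 4 + C 2 * X 1 - X 1 ^ 2

namespace G2Aux

noncomputable def Phi : MvPolynomial (Fin 2) ℂ ≃+* Polynomial (Polynomial ℂ) :=
  ((renameEquiv ℂ (Equiv.swap (0 : Fin 2) 1)).toRingEquiv.trans
    (MvPolynomial.finSuccEquiv ℂ 1).toRingEquiv).trans
    (Polynomial.mapEquiv ((MvPolynomial.finSuccEquiv ℂ 0).toRingEquiv.trans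
      (Polynomial.mapEquiv (isEmptyRingEquiv ℂ (Fin 0)))))

lemma Phi_C (c : ℂ) : Phi (C c) = Polynomial.C (Polynomial.C c) := by
  simp [Phi, finSuccEquiv_apply, Polynomial.mapEquiv, isEmptyRingEquiv]
  exact (congrArg (fun m => MvPolynomial.coeff m (C c : MvPolynomial (Fin 0) ℂ))
    (Subsingleton.elim _ 0)).trans (MvPolynomial.coeff_zero_C c)

lemma Phi_X1 : Phi (X 1) = Polynomial.X := by
  simp [Phi, Equiv.swap_apply_right, finSuccEquiv_apply, Polynomial.mapEquiv]

lemma Phi_X0 : Phi (X 0) = Polynomial.C Polynomial.X := by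
  have h : (Equiv.swap (0 : Fin 2) 1) 0 = Fin.succ 0 := by decide
  have hc : (Fin.cases Polynomial.X (fun k => Polynomial.C (X k)) (1 : Fin 2) :
      Polynomial (MvPolynomial (Fin 1) ℂ)) = Polynomial.C (X 0) := rfl
  simp [Phi, h, hc, finSuccEquiv_apply, Polynomial.mapEquiv, isEmptyRingEquiv]

/-- the coefficient of `x` in `g2 a`, as element of `ℂ[t]` -/
noncomputable def Bp (a : ℂ) : Polynomial ℂ :=
  Polynomial.C (a ^ 2) + Polynomial.C 2
    - Polynomial.C (3 / 5 * (Complex.I * (Real.sqrt 10 : ℂ)) * a) * Polynomial.X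

/-- the constant coefficient (in `x`) of `g2 a`, as element of `ℂ[t]` -/
noncomputable def Ap (a : ℂ) : Polynomial ℂ :=
  Polynomial.C (1 / 10 * a ^ 2) * Polynomial.X ^ 2 - Polynomial.C 10 * Polynomial.X ^ 2
    - Polynomial.C (12 / 5 * (Complex.I * (Real.sqrt 10 : ℂ)) * a) * Polynomial.X
    + Polynomial.C (2 * a ^ 2) + Polynomial.C 4

noncomputable def q (a : ℂ) : Polynomial (Polynomial ℂ) :=
  Polynomial.X ^ 2 - (Polynomial.C (Bp a) * Polynomial.X + Polynomial.C (Ap a))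

lemma Phi_g2 (a : ℂ) : Phi (g2 a) = - q a := by
  simp only [g2, q, Bp, Ap, map_sub, map_add, map_mul, map_pow, Phi_C, Phi_X0, Phi_X1]
  ring

lemma q_monic (a : ℂ) : (q a).Monic := by
  rw [q]
  apply Polynomial.monic_X_pow_sub
  apply lt_of_le_of_lt (Polynomial.degree_add_le _ _)
  apply max_lt
  · refine lt_of_le_of_lt (Polynomial.degree_mul_le _ _) ?_
    refine lt_of_le_of_lt (add_le_add Polynomial.degree_C_le le_rfl) ?_
    simp [Polynomial.degree_X]
  · exact lt_of_le_of_lt Polynomial.degree_C_le (by norm_num)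

lemma q_natDegree (a : ℂ) : (q a).natDegree = 2 := by
  unfold q
  compute_degree!

lemma q_coeff_zero (a : ℂ) : (q a).coeff 0 = -(Ap a) := by
  simp [q, Polynomial.coeff_X_pow]

lemma q_coeff_one (a : ℂ) : (q a).coeff 1 = -(Bp a) := by
  simp [q, Polynomial.coeff_X_pow]

lemma quad_coeffs {p q r p' q' r' : ℂ} (h : Polynomial.C p * Polynomial.X ^ 2
      + Polynomial.C q * Polynomial.X + Polynomial.C r
    = Polynomial.C p' * Polynomial.X ^ 2 + Polynomial.C q' * Polynomial.X + Polynomial.C r') :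
    p = p' ∧ q = q' ∧ r = r' := by
  refine ⟨?_, ?_, ?_⟩
  · simpa [Polynomial.coeff_X_pow] using congrArg (fun f => Polynomial.coeff f 2) h
  · simpa [Polynomial.coeff_X_pow] using congrArg (fun f => Polynomial.coeff f 1) h
  · simpa [Polynomial.coeff_X_pow] using congrArg (fun f => Polynomial.coeff f 0) h

lemma irreducible_g2 (a : ℂ) (h1 : 2 * a ^ 2 + 25 ≠ 0)
    (h2 : (a ^ 2 + 10) * (a ^ 4 - 26 * a ^ 2 - 200) ≠ 0) : Irreducible (g2 a) := by
  set s : ℂ := Complex.I * (Real.sqrt 10 : ℂ) with hsdef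
  have hs : s ^ 2 = -10 := by
    have h10 : ((Real.sqrt 10 : ℝ) : ℂ) ^ 2 = 10 := by
      rw [← Complex.ofReal_pow, Real.sq_sqrt (by norm_num : (10:ℝ) ≥ 0)]
      norm_num
    rw [hsdef, mul_pow, Complex.I_sq, h10]
    ring
  suffices hq : Irreducible (q a) by
    rw [← MulEquiv.irreducible_iff (Phi : MvPolynomial (Fin 2) ℂ ≃+* Polynomial (Polynomial ℂ)),
      Phi_g2]
    exact (Associated.rfl.neg_left (a := q a)).symm.irreducible hq
  set R := Polynomial ℂ
  set K := FractionRing R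
  set ι : R →+* K := algebraMap R K with hι
  rw [(q_monic a).irreducible_iff_irreducible_map_fraction_map (K := K)]
  by_contra hred
  obtain ⟨c₁, c₂, hc0, hc1⟩ :=
    (((q_monic a).map ι).not_irreducible_iff_exists_add_mul_eq_coeff
      (((q_monic a).natDegree_map ι).trans (q_natDegree a))).mp hred
  rw [Polynomial.coeff_map, q_coeff_zero, map_neg] at hc0
  rw [Polynomial.coeff_map, q_coeff_one, map_neg] at hc1
  set D : R := Bp a ^ 2 + 4 * Ap a with hDdef
  have key : (c₁ - c₂) ^ 2 = ι D := by
    rw [hDdef, map_add, map_mul, map_pow, map_ofNat]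
    linear_combination (ι (Bp a) - c₁ - c₂) * hc1 + 4 * hc0
  have hci : IsIntegral R (c₁ - c₂) := by
    refine ⟨Polynomial.X ^ 2 - Polynomial.C D,
      Polynomial.monic_X_pow_sub (lt_of_le_of_lt Polynomial.degree_C_le (by norm_num)), ?_⟩
    simp only [Polynomial.eval₂_sub, Polynomial.eval₂_pow, Polynomial.eval₂_X,
      Polynomial.eval₂_C]
    rw [← hι, ← key]
    ring
  obtain ⟨e, he⟩ := IsIntegrallyClosed.isIntegral_iff.mp hci
  have hE : e ^ 2 = D := by
    apply IsFractionRing.injective R K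
    show ι (e ^ 2) = ι D
    rw [map_pow, show ι e = c₁ - c₂ from he, key]
  set β : ℂ := 3 / 5 * s * a with hβ
  set δ : ℂ := 12 / 5 * s * a with hδ
  set D2 : ℂ := β ^ 2 + 4 * (1 / 10 * a ^ 2) - 4 * 10 with hD2
  set D1 : ℂ := -(2 * (a ^ 2 + 2) * β) - 4 * δ with hD1
  set D0 : ℂ := (a ^ 2 + 2) ^ 2 + 4 * (2 * a ^ 2) + 4 * 4 with hD0
  have hDq : D = Polynomial.C D2 * Polynomial.X ^ 2 + Polynomial.C D1 * Polynomial.X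
      + Polynomial.C D0 := by
    rw [hDdef, hD2, hD1, hD0, hβ, hδ, hsdef]
    simp only [Bp, Ap, map_add, map_sub, map_mul, map_pow, map_neg, map_ofNat, map_one]
    ring
  have hD2ne : D2 ≠ 0 := by
    have hv : D2 = -8 / 5 * (2 * a ^ 2 + 25) := by
      rw [hD2, hβ]; linear_combination (9 / 25 * a ^ 2) * hs
    rw [hv]
    exact mul_ne_zero (by norm_num) h1
  have hDnd : D.natDegree = 2 := by rw [hDq]; exact Polynomial.natDegree_quadratic hD2ne
  have hend : e.natDegree = 1 := by
    have h2' : (e ^ 2).natDegree = 2 := by rw [hE, hDnd]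
    rw [Polynomial.natDegree_pow] at h2'
    omega
  have heform : e = Polynomial.C (e.coeff 1) * Polynomial.X + Polynomial.C (e.coeff 0) :=
    Polynomial.eq_X_add_C_of_degree_le_one
      (by simpa [hend] using Polynomial.degree_le_natDegree (p := e))
  set u := e.coeff 1
  set v := e.coeff 0
  have hsq : Polynomial.C (u ^ 2) * Polynomial.X ^ 2 + Polynomial.C (2 * u * v) * Polynomial.X
      + Polynomial.C (v ^ 2)
      = Polynomial.C D2 * Polynomial.X ^ 2 + Polynomial.C D1 * Polynomial.X
        + Polynomial.C D0 := by
    rw [← hDq, ← hE, heform]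
    simp only [map_pow, map_mul, map_ofNat]
    ring
  obtain ⟨hu, huv, hv⟩ := quad_coeffs hsq
  have hzero : D1 ^ 2 - 4 * D2 * D0 = 0 := by
    rw [← hu, ← huv, ← hv]; ring
  have hfinal : (-8 : ℂ) / 5 * ((a ^ 2 + 10) * (a ^ 4 - 26 * a ^ 2 - 200)) = 0 := by
    rw [hD1, hD2, hD0, hβ, hδ] at hzero
    linear_combination hzero - (288 / 25 * a ^ 2 * (a ^ 2 + 10)) * hs
  exact h2 (by linear_combination (-5 / 8) * hfinal)

end G2Aux

/-- The set of `a ∈ ℂ` for which `g_{2,a}(t,x)` is not irreducible in `ℂ[t,x]` is finite;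
in particular, for all but finitely many `a ∈ ℂ` the conic `g_{2,a} = 0` is reduced and
irreducible. -/
theorem finite_not_irreducible_g2 : {a : ℂ | ¬ Irreducible (g2 a)}.Finite := by
  have hp : ((2 * Polynomial.X ^ 2 + Polynomial.C 25) * ((Polynomial.X ^ 2 + Polynomial.C 10)
      * (Polynomial.X ^ 4 - 26 * Polynomial.X ^ 2 - Polynomial.C 200)) : Polynomial ℂ) ≠ 0 := by
    intro h
    have h0 := congrArg (fun p => Polynomial.eval 0 p) h
    simp at h0
  apply Set.Finite.subset (Polynomial.finite_setOf_isRoot hp)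
  intro a ha
  simp only [Set.mem_setOf_eq] at ha ⊢
  by_contra hne
  apply ha
  rw [Polynomial.IsRoot] at hne
  simp only [Polynomial.eval_mul, Polynomial.eval_add, Polynomial.eval_sub, Polynomial.eval_pow,
    Polynomial.eval_C, Polynomial.eval_X, Polynomial.eval_ofNat, mul_ne_zero_iff] at hne
  exact G2Aux.irreducible_g2 a hne.1 (mul_ne_zero hne.2.1 hne.2.2)
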